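/- Let K ⊆ ℝ^n be a nonempty closed convex set and P: ℝ^n → K the metric projection onto K (i.e., P x ∈ K and ‖x − P x‖ ≤ ‖x − z‖ for every z ∈ K). Let S be a nonempty finite set and f: ℝ^n × S → ℝ be such that f(·,s) is concave and differentiable on ℝ^n for each s ∈ S; write φ(α) := min_{s∈S} f(α,s). Assume the set Ā of maximizers of φ over K is nonempty, with optimal value f* = max_{α∈K} φ(α). Fix δ > 0 and L > 0, and let (α^t)_{t≥0} ⊆ K and (s^t)_{t≥0} ⊆ S be sequences with s^t ∈ argmin_{s∈S} f(α^t, s), α^{t+1} = P(α^t + δ ∇_α f(α^t, s^t)), and ‖∇_α f(α^t, s^t)‖ ≤ L for all t. Then for every T ≥ 1, setting α̂_T := (1/T) Σ_{t=0}^{T−1} α^t and choosing any ŝ ∈ argmin_{s∈S} f(α̂_T, s), one has f(α̂_T, ŝ) ≥ f* − δL²/2 − dist(α^0, Ā)²/(2δT), where dist(α^0, Ā) := inf_{ᾱ∈Ā} ‖α^0 − ᾱ‖. -/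

import Mathlib

open scoped BigOperators
open Set Metric Filter
open scoped RealInnerProductSpace

lemma grad_concave_ineq {n : ℕ} (g : EuclideanSpace ℝ (Fin n) → ℝ)
    (hconc : ConcaveOn ℝ Set.univ g) (hdiff : Differentiable ℝ g)
    (x y : EuclideanSpace ℝ (Fin n)) :
    g y ≤ g x + ⟪gradient g x, y - x⟫ := by
  set c : ℝ → EuclideanSpace ℝ (Fin n) := fun τ => τ • (y - x) + x with hc
  have hcaff : ConcaveOn ℝ Set.univ (g ∘ (AffineMap.lineMap x y : ℝ →ᵃ[ℝ] _)) := by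
    simpa using hconc.comp_affineMap (AffineMap.lineMap x y : ℝ →ᵃ[ℝ] _)
  have hcomp : (g ∘ (AffineMap.lineMap x y : ℝ →ᵃ[ℝ] _)) = fun τ => g (c τ) := by
    funext τ
    simp [c, AffineMap.lineMap_apply, Function.comp]
  rw [hcomp] at hcaff
  have hcd : HasDerivAt c (y - x) 0 := by
    simpa [c] using ((hasDerivAt_id (0:ℝ)).smul_const (y - x)).add_const x
  have hgd : HasFDerivAt g (InnerProductSpace.toDual ℝ _ (gradient g x)) (c 0) := by
    have : c 0 = x := by simp [c]
    rw [this]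
    exact (hdiff x).hasGradientAt.hasFDerivAt
  have hd : HasDerivAt (fun τ => g (c τ)) ⟪gradient g x, y - x⟫ 0 := by
    have := hgd.comp_hasDerivAt 0 hcd
    simpa [Function.comp_def, InnerProductSpace.toDual_apply_apply] using this
  have := hcaff.slope_le_of_hasDerivAt (mem_univ (0:ℝ)) (mem_univ (1:ℝ)) one_pos hd
  have h0 : c 0 = x := by simp [c]
  have h1 : c 1 = y := by simp [c]
  simp only [slope_def_field, h0, h1, sub_zero, div_one] at this
  linarith [this]

set_option maxHeartbeats 1000000 in
/-- Convergence guarantee for the dual projected sub-gradient algorithm with constant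
step size `δ` applied to `max_{α ∈ K} min_{s ∈ S} f(α, s)`. -/
theorem dual_subgradient_convergence
    {n : ℕ} {S : Type*} [Fintype S] [Nonempty S]
    (K : Set (EuclideanSpace ℝ (Fin n)))
    (hKne : K.Nonempty) (hKcl : IsClosed K) (hKconv : Convex ℝ K)
    (P : EuclideanSpace ℝ (Fin n) → EuclideanSpace ℝ (Fin n))
    (hP : ∀ x, P x ∈ K ∧ ∀ z ∈ K, ‖x - P x‖ ≤ ‖x - z‖)
    (f : EuclideanSpace ℝ (Fin n) → S → ℝ)
    (hconc : ∀ s : S, ConcaveOn ℝ Set.univ (fun a => f a s))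
    (hdiff : ∀ s : S, Differentiable ℝ (fun a => f a s))
    (Abar : Set (EuclideanSpace ℝ (Fin n)))
    (hAbar : Abar = {a | a ∈ K ∧ ∀ α ∈ K, (⨅ s : S, f α s) ≤ ⨅ s : S, f a s})
    (hAne : Abar.Nonempty)
    (fstar : ℝ) (hfstar : ∀ a ∈ Abar, (⨅ s : S, f a s) = fstar)
    (δ L : ℝ) (hδ : 0 < δ) (hL : 0 < L)
    (α : ℕ → EuclideanSpace ℝ (Fin n)) (seq : ℕ → S)
    (hαK : ∀ t, α t ∈ K)
    (hargmin : ∀ (t : ℕ) (s : S), f (α t) (seq t) ≤ f (α t) s)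
    (hupdate : ∀ t : ℕ,
      α (t + 1) = P (α t + δ • gradient (fun a => f a (seq t)) (α t)))
    (hbound : ∀ t : ℕ, ‖gradient (fun a => f a (seq t)) (α t)‖ ≤ L)
    (T : ℕ) (hT : 1 ≤ T)
    (αhat : EuclideanSpace ℝ (Fin n))
    (hαhat : αhat = (T : ℝ)⁻¹ • ∑ t ∈ Finset.range T, α t)
    (shat : S) (hshat : ∀ s : S, f αhat shat ≤ f αhat s) :
    f αhat shat ≥
      fstar - δ * L ^ 2 / 2 - (Metric.infDist (α 0) Abar) ^ 2 / (2 * δ * T) := by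
  classical
  have hTpos : (0:ℝ) < T := by exact_mod_cast Nat.lt_of_lt_of_le Nat.zero_lt_one hT
  have h2δT : (0:ℝ) < 2 * δ * T := by positivity
  set D := Metric.infDist (α 0) Abar with hD
  -- squared contraction of the projection
  have hproj : ∀ x, ∀ z ∈ K, ‖P x - z‖ ^ 2 ≤ ‖x - z‖ ^ 2 := by
    intro x z hz
    have hPx := (hP x).1
    haveI : Nonempty K := ⟨⟨P x, hPx⟩⟩
    have hbdd : BddBelow (Set.range fun w : K => ‖x - (w : EuclideanSpace ℝ (Fin n))‖) := by
      refine ⟨0, ?_⟩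
      rintro r ⟨w, rfl⟩
      exact norm_nonneg _
    have hmin : ‖x - P x‖ = ⨅ w : K, ‖x - w‖ := by
      apply le_antisymm
      · exact le_ciInf fun w => (hP x).2 w w.2
      · exact ciInf_le hbdd ⟨P x, hPx⟩
    have hip : ⟪x - P x, z - P x⟫ ≤ 0 :=
      (norm_eq_iInf_iff_real_inner_le_zero hKconv hPx).mp hmin z hz
    have hdecomp : x - z = (x - P x) + (P x - z) := by abel
    have hexp : ‖x - z‖ ^ 2
        = ‖x - P x‖ ^ 2 + 2 * ⟪x - P x, P x - z⟫ + ‖P x - z‖ ^ 2 := by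
      rw [hdecomp, norm_add_sq_real]
    have h2 : ⟪x - P x, P x - z⟫ = - ⟪x - P x, z - P x⟫ := by
      rw [show P x - z = -(z - P x) by abel, inner_neg_right]
    nlinarith [sq_nonneg ‖x - P x‖]
  -- main estimate for a fixed maximizer b
  have main : ∀ b ∈ Abar,
      fstar - δ * L ^ 2 / 2 - ‖α 0 - b‖ ^ 2 / (2 * δ * T) ≤ f αhat shat := by
    intro b hb
    have hbK : b ∈ K := by rw [hAbar] at hb; exact hb.1
    have hfb : ∀ s, fstar ≤ f b s := by
      intro s
      rw [← hfstar b hb]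
      exact ciInf_le (Set.Finite.bddBelow (Set.finite_range _)) s
    have key : ∀ t, ‖α (t+1) - b‖ ^ 2
        ≤ ‖α t - b‖ ^ 2 + 2 * δ * (f (α t) (seq t) - fstar) + δ ^ 2 * L ^ 2 := by
      intro t
      set g := gradient (fun a => f a (seq t)) (α t) with hg
      have h1 : ‖α (t+1) - b‖ ^ 2 ≤ ‖α t + δ • g - b‖ ^ 2 := by
        rw [hupdate t]; exact hproj _ b hbK
      have h2 : ‖α t + δ • g - b‖ ^ 2
          = ‖α t - b‖ ^ 2 + 2 * (δ * ⟪g, α t - b⟫) + δ ^ 2 * ‖g‖ ^ 2 := by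
        have hdecomp : α t + δ • g - b = (α t - b) + δ • g := by abel
        have e1 : ⟪α t - b, δ • g⟫ = δ * ⟪g, α t - b⟫ := by
          rw [real_inner_smul_right, real_inner_comm]
        have e2 : ‖δ • g‖ ^ 2 = δ ^ 2 * ‖g‖ ^ 2 := by
          rw [norm_smul, mul_pow, Real.norm_eq_abs, sq_abs]
        rw [hdecomp, norm_add_sq_real, e1, e2]
      have h3 : ⟪g, α t - b⟫ ≤ f (α t) (seq t) - fstar := by
        have hgi := grad_concave_ineq (fun a => f a (seq t)) (hconc _) (hdiff _) (α t) b
        have e3 : ⟪g, b - α t⟫ = - ⟪g, α t - b⟫ := by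
          rw [show b - α t = -(α t - b) by abel, inner_neg_right]
        have := hfb (seq t)
        rw [← hg] at hgi
        rw [e3] at hgi
        linarith
      have h4 : ‖g‖ ^ 2 ≤ L ^ 2 := by nlinarith [hbound t, norm_nonneg g]
      have h5 : 2 * (δ * ⟪g, α t - b⟫) ≤ 2 * δ * (f (α t) (seq t) - fstar) := by
        have := mul_le_mul_of_nonneg_left h3 hδ.le
        linarith
      have h6 : δ ^ 2 * ‖g‖ ^ 2 ≤ δ ^ 2 * L ^ 2 :=
        mul_le_mul_of_nonneg_left h4 (sq_nonneg δ)
      linarith [h1, h2.le, h5, h6]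
    have tel : ∀ m : ℕ, ‖α m - b‖ ^ 2 ≤ ‖α 0 - b‖ ^ 2
        + ∑ t ∈ Finset.range m, (2 * δ * (f (α t) (seq t) - fstar) + δ ^ 2 * L ^ 2) := by
      intro m
      induction m with
      | zero => simp
      | succ m ih =>
        rw [Finset.sum_range_succ]
        have := key m
        linarith
    have hsplit : ∑ t ∈ Finset.range T, (2 * δ * (f (α t) (seq t) - fstar) + δ ^ 2 * L ^ 2)
        = 2 * δ * (∑ t ∈ Finset.range T, f (α t) (seq t))
          - 2 * δ * T * fstar + T * (δ ^ 2 * L ^ 2) := by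
      have e : ∀ t, 2 * δ * (f (α t) (seq t) - fstar) + δ ^ 2 * L ^ 2
          = 2 * δ * f (α t) (seq t) + (δ ^ 2 * L ^ 2 - 2 * δ * fstar) := fun t => by ring
      simp_rw [e]
      rw [Finset.sum_add_distrib, ← Finset.mul_sum, Finset.sum_const, Finset.card_range,
        nsmul_eq_mul]
      ring
    have hTel := tel T
    have h0 : (0:ℝ) ≤ ‖α T - b‖ ^ 2 := sq_nonneg _
    set Sf := ∑ t ∈ Finset.range T, f (α t) (seq t) with hSf
    have hS : 2 * δ * (T:ℝ) * fstar - (T:ℝ) * (δ ^ 2 * L ^ 2) - ‖α 0 - b‖ ^ 2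
        ≤ 2 * δ * Sf := by
      rw [hsplit] at hTel
      linarith
    -- Jensen
    have hjensen : ∑ t ∈ Finset.range T, (T:ℝ)⁻¹ * f (α t) shat ≤ f αhat shat := by
      have hw1 : ∑ _t ∈ Finset.range T, (T:ℝ)⁻¹ = 1 := by
        rw [Finset.sum_const, Finset.card_range, nsmul_eq_mul]
        field_simp
      have hj := (hconc shat).le_map_sum (t := Finset.range T)
        (w := fun _ => (T:ℝ)⁻¹) (p := α)
        (fun i _ => by positivity) hw1 (fun i _ => mem_univ _)
      have hsum : αhat = ∑ t ∈ Finset.range T, (T:ℝ)⁻¹ • α t := by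
        rw [hαhat, Finset.smul_sum]
      rw [hsum]
      simpa [smul_eq_mul] using hj
    have hmono : ∑ t ∈ Finset.range T, (T:ℝ)⁻¹ * f (α t) (seq t)
        ≤ ∑ t ∈ Finset.range T, (T:ℝ)⁻¹ * f (α t) shat :=
      Finset.sum_le_sum fun t _ =>
        mul_le_mul_of_nonneg_left (hargmin t shat) (by positivity)
    have hmulsum : ∑ t ∈ Finset.range T, (T:ℝ)⁻¹ * f (α t) (seq t) = (T:ℝ)⁻¹ * Sf := by
      rw [Finset.mul_sum]
    calc fstar - δ * L ^ 2 / 2 - ‖α 0 - b‖ ^ 2 / (2 * δ * T)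
        = (2 * δ * (T:ℝ) * fstar - (T:ℝ) * (δ ^ 2 * L ^ 2) - ‖α 0 - b‖ ^ 2) / (2 * δ * T) := by
          field_simp
      _ ≤ (2 * δ * Sf) / (2 * δ * T) := by
          exact div_le_div_of_nonneg_right hS h2δT.le |>.trans_eq rfl
      _ = (T:ℝ)⁻¹ * Sf := by
          field_simp
      _ ≤ f αhat shat := by
          rw [← hmulsum]
          exact hmono.trans hjensen
  -- pass to the infimum distance via an ε-argument
  have hlim : Tendsto (fun ε : ℝ => fstar - δ * L ^ 2 / 2 - (D + ε) ^ 2 / (2 * δ * T))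
      (nhdsWithin 0 (Set.Ioi 0)) (nhds (fstar - δ * L ^ 2 / 2 - D ^ 2 / (2 * δ * T))) := by
    have hc : Continuous fun ε : ℝ => fstar - δ * L ^ 2 / 2 - (D + ε) ^ 2 / (2 * δ * T) := by
      continuity
    have := (hc.tendsto 0).mono_left (nhdsWithin_le_nhds (s := Set.Ioi (0:ℝ)))
    simpa using this
  refine ge_iff_le.mpr (le_of_tendsto hlim ?_)
  filter_upwards [self_mem_nhdsWithin] with ε hε
  have hε0 : (0:ℝ) < ε := hε
  obtain ⟨b, hbA, hbd⟩ := (Metric.infDist_lt_iff hAne).mp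
    (show D < D + ε by linarith)
  have hb1 : ‖α 0 - b‖ ≤ D + ε := by
    rw [← dist_eq_norm]
    exact hbd.le
  have hb2 : ‖α 0 - b‖ ^ 2 ≤ (D + ε) ^ 2 := pow_le_pow_left₀ (norm_nonneg _) hb1 2
  have hdiv : ‖α 0 - b‖ ^ 2 / (2 * δ * T) ≤ (D + ε) ^ 2 / (2 * δ * T) :=
    div_le_div_of_nonneg_right hb2 h2δT.le |>.trans_eq rfl
  have := main b hbA
  linarith
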